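/- Let V be a symmetric positive definite d × d real matrix and a a symmetric positive semidefinite d × d real matrix. Fix ξ ∈ ℝ^d with ξ ≠ 0, and set κ = √V ξ, θ = κ/|κ|², ζ = √V θ. Then (ξ, ζ) = 1 and tr(aV) ≥ (Vξ, ξ)·(aζ, ζ). -/

import Mathlib

open Matrix

section OldSqrt
open scoped ComplexOrder
noncomputable def Matrix.PosSemidef.sqrt {n : Type*} [Fintype n] [DecidableEq n] {𝕜 : Type*}
    [RCLike 𝕜] {A : Matrix n n 𝕜} (hA : A.PosSemidef) : Matrix n n 𝕜 :=
  hA.1.eigenvectorUnitary.1 * diagonal ((↑) ∘ Real.sqrt ∘ hA.1.eigenvalues) *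
    (star hA.1.eigenvectorUnitary : Matrix n n 𝕜)
end OldSqrt

private lemma old_sqrt_mul_self {d : ℕ} {M : Matrix (Fin d) (Fin d) ℝ} (hM : M.PosSemidef) :
    hM.sqrt * hM.sqrt = M := by
  have hU : (star hM.1.eigenvectorUnitary : Matrix (Fin d) (Fin d) ℝ) * hM.1.eigenvectorUnitary.1 = 1 :=
    Matrix.UnitaryGroup.star_mul_self _
  have hD : diagonal (RCLike.ofReal ∘ Real.sqrt ∘ hM.1.eigenvalues : Fin d → ℝ) *
      diagonal (RCLike.ofReal ∘ Real.sqrt ∘ hM.1.eigenvalues) = diagonal (RCLike.ofReal ∘ hM.1.eigenvalues) := by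
    rw [diagonal_mul_diagonal]
    congr 1; funext i
    simp [Real.mul_self_sqrt (hM.eigenvalues_nonneg i)]
  conv_rhs => rw [hM.1.spectral_theorem]
  rw [Unitary.conjStarAlgAut_apply, Matrix.PosSemidef.sqrt]
  calc _ = hM.1.eigenvectorUnitary.1 * diagonal (RCLike.ofReal ∘ Real.sqrt ∘ hM.1.eigenvalues) *
      ((star hM.1.eigenvectorUnitary : Matrix (Fin d) (Fin d) ℝ) * hM.1.eigenvectorUnitary.1) *
      diagonal (RCLike.ofReal ∘ Real.sqrt ∘ hM.1.eigenvalues) * (star hM.1.eigenvectorUnitary : Matrix (Fin d) (Fin d) ℝ) := by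
        simp only [mul_assoc]
    _ = _ := by rw [hU, Matrix.mul_one, mul_assoc _ (diagonal _) (diagonal _), hD]

private lemma old_posSemidef_sqrt {d : ℕ} {M : Matrix (Fin d) (Fin d) ℝ} (hM : M.PosSemidef) :
    hM.sqrt.PosSemidef := by
  unfold Matrix.PosSemidef.sqrt
  have hs : (star hM.1.eigenvectorUnitary : Matrix (Fin d) (Fin d) ℝ) = (hM.1.eigenvectorUnitary.1)ᴴ := rfl
  rw [hs]
  apply Matrix.PosSemidef.mul_mul_conjTranspose_same
  rw [posSemidef_diagonal_iff]
  intro i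
  simp [Real.sqrt_nonneg]

private lemma key_quad_le_trace {d : ℕ} {M : Matrix (Fin d) (Fin d) ℝ}
    (hM : M.PosSemidef) (x : Fin d → ℝ) :
    (M *ᵥ x) ⬝ᵥ x ≤ (x ⬝ᵥ x) * M.trace := by
  set B := hM.sqrt with hBdef
  have hB : B * B = M := old_sqrt_mul_self hM
  have hBsym : Bᵀ = B := by
    have := (old_posSemidef_sqrt hM).isHermitian
    simpa [Matrix.IsHermitian, Matrix.conjTranspose_eq_transpose_of_trivial] using this
  have h1 : (M *ᵥ x) ⬝ᵥ x = (B *ᵥ x) ⬝ᵥ (B *ᵥ x) := by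
    rw [← hB, ← Matrix.mulVec_mulVec, dotProduct_comm,
      Matrix.dotProduct_mulVec, ← Matrix.mulVec_transpose, hBsym]
  have h2 : M.trace = ∑ i, ∑ j, (B i j) ^ 2 := by
    rw [← hB, Matrix.trace, Finset.sum_congr rfl]
    intro i _
    simp only [Matrix.diag, Matrix.mul_apply]
    refine Finset.sum_congr rfl fun j _ => ?_
    have : B j i = B i j := by rw [show B j i = Bᵀ i j from rfl, hBsym]
    rw [this, sq]
  rw [h1, h2]
  have hcs : ∀ i, (B *ᵥ x) i * (B *ᵥ x) i ≤ (∑ j, (B i j) ^ 2) * (x ⬝ᵥ x) := by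
    intro i
    have := Finset.sum_mul_sq_le_sq_mul_sq Finset.univ (fun j => B i j) x
    simpa [Matrix.mulVec, dotProduct, sq] using this
  calc (B *ᵥ x) ⬝ᵥ (B *ᵥ x) = ∑ i, (B *ᵥ x) i * (B *ᵥ x) i := rfl
    _ ≤ ∑ i, (∑ j, (B i j) ^ 2) * (x ⬝ᵥ x) := Finset.sum_le_sum fun i _ => hcs i
    _ = (x ⬝ᵥ x) * ∑ i, ∑ j, (B i j) ^ 2 := by rw [← Finset.sum_mul, mul_comm]

/-- The square-root trick: for `V` symmetric positive definite, `a` positive semidefinite,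
`ξ ≠ 0`, setting `κ = √V ξ`, `θ = κ/|κ|²`, `ζ = √V θ`, one has `(ξ, ζ) = 1` and
`tr(aV) ≥ (Vξ, ξ)·(aζ, ζ)`. -/
theorem trace_mul_ge_quadratic_form {d : ℕ} (V a : Matrix (Fin d) (Fin d) ℝ)
    (hV : V.PosDef) (ha : a.PosSemidef) (ξ : Fin d → ℝ) (hξ : ξ ≠ 0) :
    let κ : Fin d → ℝ := hV.posSemidef.sqrt *ᵥ ξ
    let θ : Fin d → ℝ := (κ ⬝ᵥ κ)⁻¹ • κ
    let ζ : Fin d → ℝ := hV.posSemidef.sqrt *ᵥ θ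
    ξ ⬝ᵥ ζ = 1 ∧ (V *ᵥ ξ) ⬝ᵥ ξ * ((a *ᵥ ζ) ⬝ᵥ ζ) ≤ (a * V).trace := by
  intro κ θ ζ
  set S := hV.posSemidef.sqrt with hSdef
  have hS : S * S = V := old_sqrt_mul_self hV.posSemidef
  have hSsym : Sᵀ = S := by
    have := (old_posSemidef_sqrt hV.posSemidef).isHermitian
    simpa [Matrix.IsHermitian, Matrix.conjTranspose_eq_transpose_of_trivial] using this
  have hdot : ∀ v w : Fin d → ℝ, (S *ᵥ v) ⬝ᵥ w = v ⬝ᵥ (S *ᵥ w) := by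
    intro v w
    rw [Matrix.dotProduct_mulVec, ← Matrix.mulVec_transpose, hSsym, dotProduct_comm]
  set c : ℝ := κ ⬝ᵥ κ with hcdef
  have hcV : c = (V *ᵥ ξ) ⬝ᵥ ξ := by
    rw [hcdef]
    show (S *ᵥ ξ) ⬝ᵥ (S *ᵥ ξ) = (V *ᵥ ξ) ⬝ᵥ ξ
    rw [hdot, Matrix.mulVec_mulVec, hS, dotProduct_comm]
  have hcpos : 0 < c := by
    rw [hcV, dotProduct_comm]
    have := hV.dotProduct_mulVec_pos hξ
    simpa using this
  have hζ : ζ = c⁻¹ • (S *ᵥ κ) := by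
    show S *ᵥ ((κ ⬝ᵥ κ)⁻¹ • κ) = c⁻¹ • (S *ᵥ κ)
    rw [Matrix.mulVec_smul, hcdef]
  have hξζ : ξ ⬝ᵥ ζ = 1 := by
    rw [hζ, dotProduct_smul, smul_eq_mul, ← hdot]
    show c⁻¹ * (κ ⬝ᵥ κ) = 1
    rw [← hcdef, inv_mul_cancel₀ hcpos.ne']
  refine ⟨hξζ, ?_⟩
  have hM : (S * a * S).PosSemidef := by
    have := ha.conjTranspose_mul_mul_same S
    have hSH : Sᴴ = S := (old_posSemidef_sqrt hV.posSemidef).isHermitian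
    rw [hSH] at this
    simpa [mul_assoc] using this
  have htr : (a * V).trace = (S * a * S).trace := by
    rw [← hS, ← mul_assoc, Matrix.trace_mul_comm, mul_assoc]
  have hq : (a *ᵥ ζ) ⬝ᵥ ζ = c⁻¹ * c⁻¹ * (((S * a * S) *ᵥ κ) ⬝ᵥ κ) := by
    rw [hζ, Matrix.mulVec_smul, smul_dotProduct, dotProduct_smul,
      smul_eq_mul, smul_eq_mul]
    ring_nf
    congr 1
    rw [← Matrix.mulVec_mulVec, ← Matrix.mulVec_mulVec, ← hdot, dotProduct_comm]
  have hkey := key_quad_le_trace hM κ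
  rw [htr, hcV.symm, hq]
  calc c * (c⁻¹ * c⁻¹ * (((S * a * S) *ᵥ κ) ⬝ᵥ κ))
      = c⁻¹ * (((S * a * S) *ᵥ κ) ⬝ᵥ κ) := by field_simp
    _ ≤ c⁻¹ * (c * (S * a * S).trace) := by
        apply mul_le_mul_of_nonneg_left _ (inv_nonneg.mpr hcpos.le)
        rw [← hcdef] at hkey; exact hkey
    _ = (S * a * S).trace := by field_simp
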